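/- Let P ≅ Z_{3^n} × Z_{3^(n−1)} with n > 1, and let t be an automorphism of P of order 2 such that C_P(t) is cyclic of order 3^(n−1). Then [P,t] ≅ Z_{3^n}, and the subgroup ℧^(n−1)(P) = ⟨x^(3^(n−1)) : x ∈ P⟩ has order 3 and is contained in [P,t] ∩ Ω₁(P). -/

import Mathlib

/-- The fixed-point subgroup `C_P(t)` of an automorphism `t` of an abelian group `P`. -/
def fixedByA {P : Type*} [AddCommGroup P] (t : AddAut P) : AddSubgroup P where
  carrier := {x : P | t x = x}
  zero_mem' := by simp
  add_mem' := by intro x y hx hy; simp only [Set.mem_setOf_eq, map_add] at *; rw [hx, hy]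
  neg_mem' := by intro x hx; simp only [Set.mem_setOf_eq, map_neg] at *; rw [hx]

/-- The commutator subgroup `[P, t] = ⟨t x - x : x ∈ P⟩`. -/
def commByA {P : Type*} [AddCommGroup P] (t : AddAut P) : AddSubgroup P :=
  AddSubgroup.closure {y : P | ∃ x : P, y = t x - x}

/-- The agemo subgroup `℧^m(P) = ⟨p^m · x : x ∈ P⟩` (here `p = 3`). -/
def mho3 (P : Type*) [AddCommGroup P] (m : ℕ) : AddSubgroup P :=
  AddSubgroup.closure {y : P | ∃ x : P, y = (3 ^ m) • x}

/-- The omega subgroup `Ω₁(P) = {x ∈ P : 3 • x = 0}` of an abelian `3`-group `P`. -/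
def omega3 (P : Type*) [AddCommGroup P] : AddSubgroup P where
  carrier := {x : P | 3 • x = 0}
  zero_mem' := by simp
  add_mem' := by
    intro x y hx hy
    simp only [Set.mem_setOf_eq] at *
    rw [smul_add, hx, hy, add_zero]
  neg_mem' := by
    intro x hx
    simp only [Set.mem_setOf_eq] at *
    rw [smul_neg, hx, neg_zero]

set_option maxHeartbeats 1000000 in
theorem stmt17 (n : ℕ) (hn : 1 < n)
    (t : AddAut (ZMod (3 ^ n) × ZMod (3 ^ (n - 1)))) (ht2 : t + t = 0) (ht1 : t ≠ 0)
    (hcyc : IsAddCyclic (fixedByA t)) (hfixcard : Nat.card (fixedByA t) = 3 ^ (n - 1)) :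
    IsAddCyclic (commByA t) ∧ Nat.card (commByA t) = 3 ^ n ∧
      Nat.card (mho3 (ZMod (3 ^ n) × ZMod (3 ^ (n - 1))) (n - 1)) = 3 ∧
      mho3 (ZMod (3 ^ n) × ZMod (3 ^ (n - 1))) (n - 1) ≤
        commByA t ⊓ omega3 (ZMod (3 ^ n) × ZMod (3 ^ (n - 1))) := by
  haveI : NeZero (3 ^ n) := ⟨pow_ne_zero _ (by norm_num)⟩
  haveI : NeZero (3 ^ (n - 1)) := ⟨pow_ne_zero _ (by norm_num)⟩
  set P := ZMod (3 ^ n) × ZMod (3 ^ (n - 1)) with hP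
  obtain ⟨m, hm⟩ : Odd (3 ^ n) := Odd.pow ⟨1, by norm_num⟩
  -- exponent
  have hord : ∀ y : P, (3 ^ n) • y = 0 := by
    intro y
    have h1 : (3 ^ n) • y.1 = 0 := by
      rw [nsmul_eq_mul, show ((3 ^ n : ℕ) : ZMod (3 ^ n)) = 0 from ZMod.natCast_self _,
        zero_mul]
    have h2 : (3 ^ n) • y.2 = 0 := by
      rw [nsmul_eq_mul, show ((3 ^ n : ℕ) : ZMod (3 ^ (n - 1))) = 0 from
        (ZMod.natCast_eq_zero_iff _ _).mpr (pow_dvd_pow 3 (Nat.sub_le n 1)), zero_mul]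
    have h3 : (3 ^ n) • y = ((3 ^ n) • y.1, (3 ^ n) • y.2) := rfl
    rw [h3, h1, h2]; rfl
  have htt : ∀ x : P, t (t x) = x := by
    intro x
    have := congrArg (fun s : AddAut P => s x) ht2
    simpa using this
  -- the hom x ↦ t x - x
  let f : P →+ P :=
    { toFun := fun x => t x - x
      map_zero' := by simp
      map_add' := by intro x y; simp only [map_add]; abel }
  have hfapp : ∀ x : P, f x = t x - x := fun _ => rfl
  have hker : f.ker = fixedByA t := by
    ext x
    simp only [AddMonoidHom.mem_ker, hfapp, sub_eq_zero]
    rfl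
  -- elements negated by t are in the range of f
  have hNN : ∀ y : P, t y = -y → y ∈ f.range := by
    intro y hy
    refine ⟨-((m + 1) • y), ?_⟩
    rw [hfapp, map_neg, map_nsmul, hy, smul_neg, neg_neg, sub_neg_eq_add, ← two_nsmul,
      ← mul_nsmul]
    have h1 : (m + 1) * 2 = 3 ^ n + 1 := by omega
    rw [h1, add_nsmul, hord, one_nsmul, zero_add]
  have hrange : commByA t = f.range := by
    refine le_antisymm ((AddSubgroup.closure_le _).mpr ?_) ?_
    · rintro y ⟨x, rfl⟩; exact ⟨x, rfl⟩
    · rintro y ⟨x, rfl⟩; exact AddSubgroup.subset_closure ⟨x, rfl⟩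
  -- cardinality of the range
  have hcardP : Nat.card P = 3 ^ n * 3 ^ (n - 1) := by
    rw [hP, Nat.card_prod, Nat.card_zmod, Nat.card_zmod]
  have hcardrange : Nat.card f.range = 3 ^ n := by
    have h1 : Nat.card P = Nat.card (P ⧸ f.ker) * Nat.card f.ker :=
      AddSubgroup.card_eq_card_quotient_mul_card_addSubgroup f.ker
    have h2 : Nat.card (P ⧸ f.ker) = Nat.card f.range :=
      Nat.card_congr (QuotientAddGroup.quotientKerEquivRange f).toEquiv
    rw [h2, hker, hfixcard, hcardP] at h1
    have hpos : 0 < 3 ^ (n - 1) := pow_pos (by norm_num) _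
    exact (Nat.eq_of_mul_eq_mul_right hpos h1.symm)
  -- decompose g = (1,0)
  set g : P := ((1 : ZMod (3 ^ n)), (0 : ZMod (3 ^ (n - 1)))) with hg
  set k : ℕ := m + 1 with hk
  have h2k : k + k = 3 ^ n + 1 := by omega
  set a : P := k • g + k • (t g) with ha
  set b : P := k • g - k • (t g) with hb
  have hab : a + b = g := by
    have e : a + b = k • g + k • g := by rw [ha, hb]; abel
    rw [e, ← add_nsmul, h2k, add_nsmul, one_nsmul, hord, zero_add]
  have haA : a ∈ fixedByA t := by
    show t a = a
    rw [ha, map_add, map_nsmul, map_nsmul, htt]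
    abel
  have hbneg : t b = -b := by
    rw [hb, map_sub, map_nsmul, map_nsmul, htt, neg_sub]
  have hbmem : b ∈ f.range := hNN b hbneg
  -- 3^(n-1) kills a
  have hasmall : (3 ^ (n - 1)) • a = 0 := by
    have hdvd : addOrderOf (⟨a, haA⟩ : fixedByA t) ∣ 3 ^ (n - 1) := by
      have h0 := addOrderOf_dvd_natCard (⟨a, haA⟩ : fixedByA t)
      rwa [hfixcard] at h0
    have h2 : ((3 ^ (n - 1)) • (⟨a, haA⟩ : fixedByA t) : fixedByA t) = 0 :=
      addOrderOf_dvd_iff_nsmul_eq_zero.mp hdvd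
    have := congrArg (fun x : fixedByA t => (x : P)) h2
    simpa using this
  -- 3^(n-1) does not kill g
  have hgbig : (3 ^ (n - 1)) • g ≠ 0 := by
    intro h
    have h1 : (3 ^ (n - 1)) • (1 : ZMod (3 ^ n)) = 0 := congrArg Prod.fst h
    rw [nsmul_eq_mul, mul_one] at h1
    have hdvd : 3 ^ n ∣ 3 ^ (n - 1) := (ZMod.natCast_eq_zero_iff _ _).mp h1
    have hlt : 3 ^ (n - 1) < 3 ^ n := Nat.pow_lt_pow_right (by norm_num) (by omega)
    have := Nat.le_of_dvd (pow_pos (by norm_num) _) hdvd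
    omega
  have hbbig : (3 ^ (n - 1)) • b ≠ 0 := by
    intro h
    apply hgbig
    rw [← hab, smul_add, hasmall, h, add_zero]
  -- order of b is 3^n
  have hordb : addOrderOf b = 3 ^ n := by
    have hdvd : addOrderOf b ∣ 3 ^ n := addOrderOf_dvd_iff_nsmul_eq_zero.mpr (hord b)
    obtain ⟨j, hj, hje⟩ := (Nat.dvd_prime_pow Nat.prime_three).mp hdvd
    rcases Nat.lt_or_ge j n with hlt | hge
    · exfalso
      apply hbbig
      refine addOrderOf_dvd_iff_nsmul_eq_zero.mp ?_
      rw [hje]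
      exact pow_dvd_pow 3 (by omega)
    · rw [hje]; congr 1; omega
  -- cyclicity
  have hcyclic : IsAddCyclic f.range := by
    refine isAddCyclic_of_addOrderOf_eq_card (⟨b, hbmem⟩ : f.range) ?_
    rw [AddSubgroup.addOrderOf_mk, hordb, hcardrange]
  -- mho3 part
  set z : P := (3 ^ (n - 1)) • g with hz
  have hzne : z ≠ 0 := hgbig
  have h3z : 3 • z = 0 := by
    rw [hz, ← mul_nsmul']
    have h33 : 3 * 3 ^ (n - 1) = 3 ^ n := by
      rw [← pow_succ']
      congr 1
      omega
    rw [h33]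
    exact hord g
  have hzmul : ∀ x : P, (3 ^ (n - 1)) • x ∈ AddSubgroup.zmultiples z := by
    intro x
    obtain ⟨c, hc⟩ := (ZMod.natCast_rightInverse (n := 3 ^ n)).surjective x.1
    refine AddSubgroup.mem_zmultiples_iff.mpr ⟨(c : ℤ), ?_⟩
    have hx2 : (3 ^ (n - 1)) • x.2 = 0 := by
      rw [nsmul_eq_mul, show ((3 ^ (n - 1) : ℕ) : ZMod (3 ^ (n - 1))) = 0 from
        ZMod.natCast_self _, zero_mul]
    have hx1 : (3 ^ (n - 1)) • x.1 = c • ((3 ^ (n - 1)) • (1 : ZMod (3 ^ n))) := by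
      rw [← hc, nsmul_eq_mul, nsmul_eq_mul, nsmul_eq_mul, mul_one]
      push_cast
      ring
    have he1 : (3 ^ (n - 1)) • x = ((3 ^ (n - 1)) • x.1, (3 ^ (n - 1)) • x.2) := rfl
    rw [he1, hx1, hx2]
    rw [natCast_zsmul, hz, hg]
    have he2 : (3 ^ (n - 1)) • ((1 : ZMod (3 ^ n)), (0 : ZMod (3 ^ (n - 1)))) =
        ((3 ^ (n - 1)) • (1 : ZMod (3 ^ n)), (3 ^ (n - 1)) • (0 : ZMod (3 ^ (n - 1)))) := rfl
    rw [he2, smul_zero]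
    have he3 : c • (((3 ^ (n - 1)) • (1 : ZMod (3 ^ n)), (0 : ZMod (3 ^ (n - 1))))) =
        (c • ((3 ^ (n - 1)) • (1 : ZMod (3 ^ n))), c • (0 : ZMod (3 ^ (n - 1)))) := rfl
    rw [he3, smul_zero]
  have hmho : mho3 P (n - 1) = AddSubgroup.zmultiples z := by
    refine le_antisymm ((AddSubgroup.closure_le _).mpr ?_) ?_
    · rintro y ⟨x, rfl⟩; exact hzmul x
    · refine (AddSubgroup.zmultiples_le).mpr ?_
      exact AddSubgroup.subset_closure ⟨g, rfl⟩
  have hordz : addOrderOf z = 3 := by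
    have hdvd : addOrderOf z ∣ 3 := addOrderOf_dvd_iff_nsmul_eq_zero.mpr h3z
    rcases (Nat.prime_three).eq_one_or_self_of_dvd _ hdvd with h | h
    · exact absurd (AddMonoid.addOrderOf_eq_one_iff.mp h) hzne
    · exact h
  have hcardmho : Nat.card (mho3 P (n - 1)) = 3 := by
    rw [hmho, Nat.card_zmultiples, hordz]
  have hzb : z = (3 ^ (n - 1)) • b := by
    rw [hz, ← hab, smul_add, hasmall, zero_add]
  have hzcomm : z ∈ commByA t := by
    rw [hrange]
    refine hNN z ?_
    rw [hzb, map_nsmul, hbneg, smul_neg]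
  have hzomega : z ∈ omega3 P := h3z
  refine ⟨?_, ?_, hcardmho, ?_⟩
  · rw [hrange]; exact hcyclic
  · rw [hrange]; exact hcardrange
  · rw [hmho]
    exact (AddSubgroup.zmultiples_le).mpr ⟨hzcomm, hzomega⟩
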